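/- The topological entropy h(G) of a free semigroup action G generated by finitely many continuous maps on a compact metric space coincides with its pseudo-entropy h*(G), i.e. h(G) = h*(G). -/

import Mathlib

open Metric Filter Set
open scoped Classical

noncomputable section

variable {X : Type*} [MetricSpace X] {Y : Type*} [MetricSpace Y] {ι κ : Type*}

/-- `c` satisfies the `(w, δ)`-chain condition along the word `w`. -/
def IsChainSeq (f : ι → X → X) (w : List ι) (δ : ℝ) (c : ℕ → X) : Prop :=
  ∀ (j : ℕ) (h : j < w.length), dist (f (w.get ⟨j, h⟩) (c j)) (c (j + 1)) ≤ δ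

/-- There is a `(w, δ)`-chain from `a` to `b` with `|w| = n`. -/
def ChainFrom (f : ι → X → X) (δ : ℝ) (a b : X) (n : ℕ) : Prop :=
  ∃ w : List ι, w.length = n ∧ ∃ c : ℕ → X, IsChainSeq f w δ c ∧ c 0 = a ∧ c n = b

/-- `x` is a chain recurrent point of the action generated by `f`. -/
def ChainRecurrentPt (f : ι → X → X) (x : X) : Prop :=
  ∀ ε : ℝ, 0 < ε → ∃ n : ℕ, 0 < n ∧ ChainFrom f ε x x n

/-- The action generated by `f` is chain recurrent. -/
def ChainRecurrent (f : ι → X → X) : Prop := ∀ x : X, ChainRecurrentPt f x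

/-- The action generated by `f` is chain transitive. -/
def ChainTransitive (f : ι → X → X) : Prop :=
  ∀ ε : ℝ, 0 < ε → ∀ a b : X, ∃ n : ℕ, 0 < n ∧ ChainFrom f ε a b n

/-- The action generated by `f` is chain mixing. -/
def ChainMixing (f : ι → X → X) : Prop :=
  ∀ ε : ℝ, 0 < ε → ∃ N : ℕ, 0 < N ∧ ∀ a b : X, ∀ n : ℕ, N ≤ n → ChainFrom f ε a b n

/-- The `ε`-chain recurrence time `r_ε(x, G)`. -/
def rTime (f : ι → X → X) (ε : ℝ) (x : X) : ℕ :=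
  sInf {n : ℕ | 0 < n ∧ ChainFrom f ε x x n}

/-- `r_ε(G) = max_x r_ε(x, G)`. -/
def rTimeSup (f : ι → X → X) (ε : ℝ) : ℕ :=
  sSup (Set.range fun x : X => rTime f ε x)

/-- The chain mixing time `m_ε(x, δ, G)`. -/
def mTime (f : ι → X → X) (ε δ : ℝ) (x : X) : ℕ :=
  sInf {N : ℕ | ∀ n : ℕ, N ≤ n → ∀ y : X, ∃ z : X, dist z x < δ ∧ ChainFrom f ε z y n}

/-- `m_ε(δ, G) = max_x m_ε(x, δ, G)`. -/
def mTimeSup (f : ι → X → X) (ε δ : ℝ) : ℕ :=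
  sSup (Set.range fun x : X => mTime f ε δ x)

/-- `f_w = f_{i₀} ∘ f_{i₁} ∘ ⋯ ∘ f_{i_{k-1}}` applied to `x`. -/
def applyWord (f : ι → X → X) (w : List ι) (x : X) : X := w.foldr f x

/-- The generators of `G^k`, indexed by the words of length `k`. -/
def powerGens (f : ι → X → X) (k : ℕ) : (Fin k → ι) → X → X :=
  fun u => applyWord f (List.ofFn u)

/-- The generators `f_j × g_k` of the product action `G × H`. -/
def prodGens (f : ι → X → X) (g : κ → Y → Y) : ι × κ → X × Y → X × Y :=
  fun p z => (f p.1 z.1, g p.2 z.2)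

/-- `T_ε(x)`: the set of lengths of `(w, ε)`-chains from `x` to itself. -/
def Tset (f : ι → X → X) (ε : ℝ) (x : X) : Set ℕ :=
  {n : ℕ | 0 < n ∧ ChainFrom f ε x x n}

/-- `k = gcd T` for a set `T ⊆ ℕ`. -/
def IsGCDOf (T : Set ℕ) (k : ℕ) : Prop :=
  (∀ t ∈ T, k ∣ t) ∧ ∀ d : ℕ, (∀ t ∈ T, d ∣ t) → d ∣ k

/-- `x ∼_ε y`: there is an `(w, ε)`-chain from `x` to `y` whose length is a multiple of `k`. -/
def RelEps (f : ι → X → X) (ε : ℝ) (k : ℕ) (x y : X) : Prop :=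
  ∃ n : ℕ, 0 < n ∧ k ∣ n ∧ ChainFrom f ε x y n

/-- The orbit segment: the first `j` letters of `w` applied, in order, to `x`. -/
def orbitSeg (f : ι → X → X) (w : List ι) (x : X) (j : ℕ) : X :=
  (w.take j).foldl (fun y i => f i y) x

/-- The Bowen-type word metric `d_w`. -/
def wordDist (f : ι → X → X) (w : List ι) (x y : X) : ℝ :=
  ⨆ j : Fin (w.length + 1), dist (orbitSeg f w x (j : ℕ)) (orbitSeg f w y (j : ℕ))

/-- `N(w, ε, G)`: maximal cardinality of a `(w, ε, G)`-separated subset of `X`. -/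
def sepMax (f : ι → X → X) (w : List ι) (ε : ℝ) : ℕ :=
  sSup {k : ℕ | ∃ K : Finset X,
    (∀ x ∈ K, ∀ y ∈ K, x ≠ y → ε ≤ wordDist f w x y) ∧ K.card = k}

/-- Bufetov's topological entropy `h(G)` of a free semigroup action. -/
def topEntropy {m : ℕ} (f : Fin m → X → X) : ℝ :=
  ⨆ ε : {e : ℝ // 0 < e},
    Filter.limsup (fun n : ℕ =>
      Real.log ((∑ w : Fin n → Fin m, (sepMax f (List.ofFn w) ε.1 : ℝ)) / (m : ℝ) ^ n) / (n : ℝ))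
      Filter.atTop

/-- `N*(w, ε, δ, G)`: maximal cardinality of a `(w, ε, δ, G)`-pseudo-separated set. -/
def pseudoSepMax (f : ι → X → X) (w : List ι) (ε δ : ℝ) : ℕ :=
  sSup {k : ℕ | ∃ K : Finset (ℕ → X),
    (∀ c ∈ K, IsChainSeq f w δ c) ∧
    (∀ c ∈ K, ∀ c' ∈ K, c ≠ c' → ∃ j : ℕ, j < w.length ∧ ε < dist (c j) (c' j)) ∧
    K.card = k}

/-- `B*(w, ε, δ, G)`: minimal cardinality of a `(w, ε, δ, G)`-pseudo-spanning set. -/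
def pseudoSpanMin (f : ι → X → X) (w : List ι) (ε δ : ℝ) : ℕ :=
  sInf {k : ℕ | ∃ K : Finset (ℕ → X),
    (∀ c ∈ K, IsChainSeq f w δ c) ∧
    (∀ c : ℕ → X, IsChainSeq f w δ c →
      ∃ c' ∈ K, ∀ j : ℕ, j < w.length → dist (c j) (c' j) ≤ ε) ∧
    K.card = k}

/-- The pseudo-entropy `h*(G)` of a free semigroup action. -/
def pseudoEntropy {m : ℕ} (f : Fin m → X → X) : ℝ :=
  ⨆ ε : {e : ℝ // 0 < e}, ⨅ δ : {d : ℝ // 0 < d},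
    Filter.limsup (fun n : ℕ =>
      Real.log ((∑ w : Fin n → Fin m, (pseudoSepMax f (List.ofFn w) ε.1 δ.1 : ℝ)) / (m : ℝ) ^ n)
        / (n : ℝ)) Filter.atTop

/-- The metric `d'(ω, ω') = m^{-k}`, `k = inf {n | ωₙ ≠ ω'ₙ}`, on `Σ_m^+ = ℕ → Fin m`. -/
def sigmaDist (m : ℕ) (ω ω' : ℕ → Fin m) : ℝ :=
  if h : ∃ n : ℕ, ω n ≠ ω' n then (1 / (m : ℝ)) ^ Nat.find h else 0

/-- The metric `D = max {d', d}` on `Σ_m^+ × X`. -/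
def skewDist (m : ℕ) (p q : (ℕ → Fin m) × X) : ℝ :=
  max (sigmaDist m p.1 q.1) (dist p.2 q.2)

/-- The skew-product transformation `F(ω, x) = (σ ω, f_{ω 0} x)`. -/
def skewMap {m : ℕ} (f : Fin m → X → X) : (ℕ → Fin m) × X → (ℕ → Fin m) × X :=
  fun p => (fun n => p.1 (n + 1), f (p.1 0) p.2)

/-- `c` is a `δ`-pseudo-orbit of length `n + 1` of the single map `F`,
w.r.t. the distance function `D`. -/
def IsPseudoOrbit {Z : Type*} (D : Z → Z → ℝ) (F : Z → Z) (n : ℕ) (δ : ℝ) (c : ℕ → Z) : Prop :=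
  ∀ j : ℕ, j < n → D (F (c j)) (c (j + 1)) ≤ δ

/-- `N*(n, ε, δ, F)` for a single map `F` w.r.t. a distance function `D`. -/
def pseudoSepMaxMap {Z : Type*} (D : Z → Z → ℝ) (F : Z → Z) (n : ℕ) (ε δ : ℝ) : ℕ :=
  sSup {k : ℕ | ∃ K : Finset (ℕ → Z),
    (∀ c ∈ K, IsPseudoOrbit D F n δ c) ∧
    (∀ c ∈ K, ∀ c' ∈ K, c ≠ c' → ∃ j : ℕ, j < n ∧ ε < D (c j) (c' j)) ∧
    K.card = k}

/-- `B*(n, ε, δ, F)` for a single map `F` w.r.t. a distance function `D`. -/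
def pseudoSpanMinMap {Z : Type*} (D : Z → Z → ℝ) (F : Z → Z) (n : ℕ) (ε δ : ℝ) : ℕ :=
  sInf {k : ℕ | ∃ K : Finset (ℕ → Z),
    (∀ c ∈ K, IsPseudoOrbit D F n δ c) ∧
    (∀ c : ℕ → Z, IsPseudoOrbit D F n δ c →
      ∃ c' ∈ K, ∀ j : ℕ, j ≤ n → D (c j) (c' j) ≤ ε) ∧
    K.card = k}

/-- The pseudo-entropy `h*(F)` of a single map `F` w.r.t. a distance function `D`. -/
def pseudoEntropyMap {Z : Type*} (D : Z → Z → ℝ) (F : Z → Z) : ℝ :=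
  ⨆ ε : {e : ℝ // 0 < e}, ⨅ δ : {d : ℝ // 0 < d},
    Filter.limsup (fun n : ℕ =>
      Real.log (pseudoSepMaxMap D F n ε.1 δ.1 : ℝ) / (n : ℝ)) Filter.atTop

/-- An `ε`-chain of length `n` from `a` to `b` for a single map. -/
def ChainFromMap {Z : Type*} (D : Z → Z → ℝ) (F : Z → Z) (δ : ℝ) (a b : Z) (n : ℕ) : Prop :=
  ∃ c : ℕ → Z, IsPseudoOrbit D F n δ c ∧ c 0 = a ∧ c n = b

/-- `r_ε(z, F)` for a single map. -/
def rTimeMap {Z : Type*} (D : Z → Z → ℝ) (F : Z → Z) (ε : ℝ) (z : Z) : ℕ :=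
  sInf {n : ℕ | 0 < n ∧ ChainFromMap D F ε z z n}

/-- `r_ε(F)` for a single map. -/
def rTimeMapSup {Z : Type*} (D : Z → Z → ℝ) (F : Z → Z) (ε : ℝ) : ℕ :=
  sSup (Set.range fun z : Z => rTimeMap D F ε z)

/-- `m_ε(z, δ, F)` for a single map. -/
def mTimeMap {Z : Type*} (D : Z → Z → ℝ) (F : Z → Z) (ε δ : ℝ) (z : Z) : ℕ :=
  sInf {N : ℕ | ∀ n : ℕ, N ≤ n → ∀ y : Z, ∃ z' : Z, D z' z < δ ∧ ChainFromMap D F ε z' y n}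

/-- `m_ε(δ, F)` for a single map. -/
def mTimeMapSup {Z : Type*} (D : Z → Z → ℝ) (F : Z → Z) (ε δ : ℝ) : ℕ :=
  sSup (Set.range fun z : Z => mTimeMap D F ε δ z)

/-- `N_δ(X)`: the smallest number of sets of diameter at most `δ` that cover `X`. -/
def coverNum (X : Type*) [MetricSpace X] (δ : ℝ) : ℕ :=
  sInf {k : ℕ | ∃ S : Finset (Set X),
    (∀ s ∈ S, Metric.diam s ≤ δ) ∧ (⋃ s ∈ S, s) = Set.univ ∧ S.card = k}

/-- The upper box dimension of `X`. -/
def upperBoxDim (X : Type*) [MetricSpace X] : ℝ :=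
  Filter.limsup (fun δ : ℝ => Real.log (coverNum X δ : ℝ) / (-Real.log δ))
    (nhdsWithin 0 (Set.Ioi 0))

/-- The lower box dimension of `X`. -/
def lowerBoxDim (X : Type*) [MetricSpace X] : ℝ :=
  Filter.liminf (fun δ : ℝ => Real.log (coverNum X δ : ℝ) / (-Real.log δ))
    (nhdsWithin 0 (Set.Ioi 0))

end

noncomputable section
set_option linter.unusedSectionVars false
set_option linter.unusedVariables false
variable {X : Type*} [MetricSpace X] {ι : Type*}

lemma aux_orbitSeg_zero (f : ι → X → X) (w : List ι) (x : X) : orbitSeg f w x 0 = x := rfl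

lemma aux_orbitSeg_succ (f : ι → X → X) (w : List ι) (x : X) (j : ℕ) (h : j < w.length) :
    orbitSeg f w x (j + 1) = f (w.get ⟨j, h⟩) (orbitSeg f w x j) := by
  unfold orbitSeg
  simp only [List.get_eq_getElem]
  rw [List.take_succ, List.getElem?_eq_getElem h]
  simp only [Option.toList_some, List.foldl_append, List.foldl_cons, List.foldl_nil]

lemma aux_orbitSeg_append (f : ι → X → X) (u v : List ι) (x : X) {j : ℕ} (h : j ≤ u.length) :
    orbitSeg f (u ++ v) x j = orbitSeg f u x j := by
  unfold orbitSeg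
  rw [List.take_append_of_le_length h]

lemma aux_chain_mono {f : ι → X → X} {w : List ι} {δ δ' : ℝ} {c : ℕ → X}
    (h : IsChainSeq f w δ c) (hδ : δ ≤ δ') : IsChainSeq f w δ' c :=
  fun j hj => (h j hj).trans hδ

lemma aux_chain_prefix {f : ι → X → X} {u v : List ι} {δ : ℝ} {c : ℕ → X}
    (hc : IsChainSeq f (u ++ v) δ c) : IsChainSeq f u δ c := by
  intro j h
  have h2 : j < (u ++ v).length := by simp; omega
  have := hc j h2
  rwa [show (u ++ v).get ⟨j, h2⟩ = u.get ⟨j, h⟩ by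
    simp only [List.get_eq_getElem]
    exact List.getElem_append_left h] at this

lemma aux_chain_shift {f : ι → X → X} {u v : List ι} {δ : ℝ} {c : ℕ → X}
    (hc : IsChainSeq f (u ++ v) δ c) : IsChainSeq f v δ (fun j => c (u.length + j)) := by
  intro j h
  have h2 : u.length + j < (u ++ v).length := by simp; omega
  have := hc (u.length + j) h2
  rw [show (u ++ v).get ⟨u.length + j, h2⟩ = v.get ⟨j, h⟩ by
    simp only [List.get_eq_getElem]
    rw [List.getElem_append_right (by omega)]
    congr 1
    omega] at this
  simpa [Nat.add_assoc] using this

lemma aux_orbit_isChain (f : ι → X → X) (w : List ι) (x : X) {δ : ℝ} (hδ : 0 ≤ δ) :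
    IsChainSeq f w δ (orbitSeg f w x) := by
  intro j h
  rw [aux_orbitSeg_succ f w x j h]
  simpa using hδ

lemma aux_le_wordDist (f : ι → X → X) (w : List ι) (x y : X) {j : ℕ} (h : j ≤ w.length) :
    dist (orbitSeg f w x j) (orbitSeg f w y j) ≤ wordDist f w x y := by
  have hb : BddAbove (Set.range fun j : Fin (w.length + 1) =>
      dist (orbitSeg f w x (j : ℕ)) (orbitSeg f w y (j : ℕ))) := (Set.finite_range _).bddAbove
  have := le_ciSup hb (⟨j, by omega⟩ : Fin (w.length + 1))
  exact this

lemma aux_wordDist_le (f : ι → X → X) (w : List ι) (x y : X) {a : ℝ}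
    (h : ∀ j : ℕ, j ≤ w.length → dist (orbitSeg f w x j) (orbitSeg f w y j) ≤ a) :
    wordDist f w x y ≤ a := by
  apply ciSup_le
  intro j
  exact h j (by omega)

lemma aux_wordDist_self (f : ι → X → X) (w : List ι) (x : X) : wordDist f w x x = 0 := by
  unfold wordDist
  simp [ciSup_const]

lemma aux_wordDist_comm (f : ι → X → X) (w : List ι) (x y : X) :
    wordDist f w x y = wordDist f w y x := by
  unfold wordDist
  simp_rw [dist_comm]

lemma aux_net (X : Type*) [MetricSpace X] [CompactSpace X] [Nonempty X] {ρ : ℝ} (hρ : 0 < ρ) :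
    ∃ (S : Finset X) (sel : X → X), 1 ≤ S.card ∧ ∀ x : X, sel x ∈ S ∧ dist x (sel x) < ρ := by
  obtain ⟨t, -, tfin, ht⟩ := finite_cover_balls_of_compact (isCompact_univ : IsCompact (Set.univ : Set X)) hρ
  have hx : ∀ x : X, ∃ p, p ∈ tfin.toFinset ∧ dist x p < ρ := by
    intro x
    have h2 := ht (Set.mem_univ x)
    simp only [Set.mem_iUnion] at h2
    obtain ⟨p, hp, hxp⟩ := h2
    exact ⟨p, tfin.mem_toFinset.2 hp, by simpa [Metric.mem_ball] using hxp⟩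
  choose sel h1 h2 using hx
  exact ⟨tfin.toFinset, sel, Finset.card_pos.2 ⟨_, h1 (Classical.arbitrary X)⟩,
    fun x => ⟨h1 x, h2 x⟩⟩

lemma aux_pseudo_card_bound (X : Type*) [MetricSpace X] [CompactSpace X] [Nonempty X]
    {ρ : ℝ} (hρ : 0 < ρ) :
    ∃ C : ℕ, 1 ≤ C ∧ ∀ (n : ℕ) (K : Finset (ℕ → X)),
      (∀ c ∈ K, ∀ c' ∈ K, c ≠ c' → ∃ j : ℕ, j < n ∧ ρ < dist (c j) (c' j)) →
      K.card ≤ C ^ n := by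
  obtain ⟨S, sel, hS1, hsel⟩ := aux_net X (half_pos hρ)
  refine ⟨S.card, hS1, fun n K hsep => ?_⟩
  have hcard : K.card ≤ (Finset.univ : Finset (Fin n → {x // x ∈ S})).card := by
    apply Finset.card_le_card_of_injOn
      (fun c (j : Fin n) => (⟨sel (c (j : ℕ)), (hsel (c (j : ℕ))).1⟩ : {x // x ∈ S}))
      (fun _ _ => Finset.mem_univ _)
    intro c hc c' hc' hcc
    by_contra hne
    obtain ⟨j, hj, hd⟩ := hsep c hc c' hc' hne
    have h1 : dist (c j) (sel (c j)) < ρ/2 := (hsel (c j)).2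
    have h2 : dist (c' j) (sel (c' j)) < ρ/2 := (hsel (c' j)).2
    have hsame : sel (c j) = sel (c' j) := congrArg Subtype.val (congrFun hcc ⟨j, hj⟩)
    have t1 := dist_triangle (c j) (sel (c j)) (c' j)
    have h2' : dist (sel (c j)) (c' j) < ρ/2 := by rw [dist_comm, hsame]; exact h2
    linarith
  simpa [Fintype.card_fun] using hcard

lemma aux_sep_card_bound (f : ι → X → X) [CompactSpace X] [Nonempty X]
    {ρ : ℝ} (hρ : 0 < ρ) :
    ∃ C : ℕ, 1 ≤ C ∧ ∀ (w : List ι) (K : Finset X),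
      (∀ x ∈ K, ∀ y ∈ K, x ≠ y → ρ ≤ wordDist f w x y) → K.card ≤ C ^ (w.length + 1) := by
  obtain ⟨S, sel, hS1, hsel⟩ := aux_net X (show (0:ℝ) < ρ/3 by positivity)
  refine ⟨S.card, hS1, fun w K hsep => ?_⟩
  have hcard : K.card ≤ (Finset.univ : Finset (Fin (w.length + 1) → {x // x ∈ S})).card := by
    apply Finset.card_le_card_of_injOn
      (fun x (j : Fin (w.length + 1)) =>
        (⟨sel (orbitSeg f w x (j : ℕ)), (hsel (orbitSeg f w x (j : ℕ))).1⟩ : {x // x ∈ S}))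
      (fun _ _ => Finset.mem_univ _)
    intro x hx y hy hxy
    by_contra hne
    have hwd := hsep x hx y hy hne
    have : wordDist f w x y ≤ ρ/3 + ρ/3 := by
      apply aux_wordDist_le
      intro j hj
      have h1 : dist (orbitSeg f w x j) (sel (orbitSeg f w x j)) < ρ/3 := (hsel _).2
      have h2 : dist (orbitSeg f w y j) (sel (orbitSeg f w y j)) < ρ/3 := (hsel _).2
      have hsame : sel (orbitSeg f w x j) = sel (orbitSeg f w y j) :=
        congrArg Subtype.val (congrFun hxy ⟨j, by omega⟩)
      have t1 := dist_triangle (orbitSeg f w x j) (sel (orbitSeg f w x j)) (orbitSeg f w y j)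
      have h2' : dist (sel (orbitSeg f w x j)) (orbitSeg f w y j) < ρ/3 := by
        rw [dist_comm, hsame]; exact h2
      linarith
    linarith
  simpa [Fintype.card_fun] using hcard

lemma aux_sepMax_spec (f : ι → X → X) (w : List ι) [CompactSpace X] [Nonempty X]
    {ρ : ℝ} (hρ : 0 < ρ) :
    ∃ K : Finset X, (∀ x ∈ K, ∀ y ∈ K, x ≠ y → ρ ≤ wordDist f w x y) ∧
      K.card = sepMax f w ρ ∧ 1 ≤ sepMax f w ρ ∧
      ∀ x : X, ∃ p ∈ K, wordDist f w x p < ρ := by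
  obtain ⟨C, hC, hbound⟩ := aux_sep_card_bound f hρ
  set 𝒮 : Set ℕ := {k : ℕ | ∃ K : Finset X,
    (∀ x ∈ K, ∀ y ∈ K, x ≠ y → ρ ≤ wordDist f w x y) ∧ K.card = k} with h𝒮
  have hbdd : BddAbove 𝒮 := ⟨C ^ (w.length + 1), by
    rintro k ⟨K, hK, rfl⟩; exact hbound w K hK⟩
  have hone : 1 ∈ 𝒮 := ⟨{Classical.arbitrary X}, by simp, Finset.card_singleton _⟩
  have hsup : sepMax f w ρ = sSup 𝒮 := rfl
  obtain ⟨K, hK, hcard⟩ := Nat.sSup_mem ⟨1, hone⟩ hbdd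
  have hge1 : 1 ≤ sepMax f w ρ := le_csSup hbdd hone
  refine ⟨K, hK, by rw [hsup, hcard], hge1, ?_⟩
  intro x
  by_contra hno
  push_neg at hno
  have hxK : x ∉ K := by
    intro hx
    have := hno x hx
    rw [aux_wordDist_self] at this
    linarith
  have hsep' : ∀ a ∈ insert x K, ∀ b ∈ insert x K, a ≠ b → ρ ≤ wordDist f w a b := by
    intro a ha b hb hab
    rcases Finset.mem_insert.1 ha with ha' | ha'
    · rcases Finset.mem_insert.1 hb with hb' | hb'
      · exact absurd (ha'.trans hb'.symm) hab
      · subst ha'; exact hno b hb'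
    · rcases Finset.mem_insert.1 hb with hb' | hb'
      · subst hb'; rw [aux_wordDist_comm]; exact hno a ha'
      · exact hK a ha' b hb' hab
  have hmem2 : K.card + 1 ∈ 𝒮 :=
    ⟨insert x K, hsep', by rw [Finset.card_insert_of_notMem hxK]⟩
  have := le_csSup hbdd hmem2
  omega

lemma aux_pseudo_bdd (f : ι → X → X) (w : List ι) {ε : ℝ} (δ : ℝ)
    [CompactSpace X] [Nonempty X] (hε : 0 < ε) :
    BddAbove {k : ℕ | ∃ K : Finset (ℕ → X),
      (∀ c ∈ K, IsChainSeq f w δ c) ∧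
      (∀ c ∈ K, ∀ c' ∈ K, c ≠ c' → ∃ j : ℕ, j < w.length ∧ ε < dist (c j) (c' j)) ∧
      K.card = k} := by
  obtain ⟨C, hC, hbound⟩ := aux_pseudo_card_bound X hε
  exact ⟨C ^ w.length, by rintro k ⟨K, -, hsep, rfl⟩; exact hbound w.length K hsep⟩

lemma aux_zero_mem_pseudo (f : ι → X → X) (w : List ι) (ε δ : ℝ) :
    0 ∈ {k : ℕ | ∃ K : Finset (ℕ → X),
      (∀ c ∈ K, IsChainSeq f w δ c) ∧
      (∀ c ∈ K, ∀ c' ∈ K, c ≠ c' → ∃ j : ℕ, j < w.length ∧ ε < dist (c j) (c' j)) ∧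
      K.card = k} :=
  ⟨∅, by simp, by simp, rfl⟩

lemma aux_one_le_pseudoSepMax (f : ι → X → X) (w : List ι) [CompactSpace X] [Nonempty X]
    {ε δ : ℝ} (hε : 0 < ε) (hδ : 0 ≤ δ) : 1 ≤ pseudoSepMax f w ε δ := by
  apply le_csSup (aux_pseudo_bdd f w δ hε)
  refine ⟨{orbitSeg f w (Classical.arbitrary X)}, ?_, ?_, Finset.card_singleton _⟩
  · intro c hc
    rw [Finset.mem_singleton] at hc
    subst hc
    exact aux_orbit_isChain f w _ hδ
  · intro c hc c' hc' hne
    rw [Finset.mem_singleton] at hc hc'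
    exact absurd (hc.trans hc'.symm) hne

lemma aux_pseudoSepMax_le_pow (f : ι → X → X) (w : List ι) [CompactSpace X] [Nonempty X]
    {ε : ℝ} (δ : ℝ) (hε : 0 < ε) {C : ℕ}
    (hbound : ∀ (n : ℕ) (K : Finset (ℕ → X)),
      (∀ c ∈ K, ∀ c' ∈ K, c ≠ c' → ∃ j : ℕ, j < n ∧ ε < dist (c j) (c' j)) →
      K.card ≤ C ^ n) :
    pseudoSepMax f w ε δ ≤ C ^ w.length := by
  apply csSup_le ⟨0, aux_zero_mem_pseudo f w ε δ⟩
  rintro k ⟨K, -, hsep, rfl⟩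
  exact hbound w.length K hsep

lemma aux_sep_le_pseudo (f : ι → X → X) (w : List ι) (i : ι) [CompactSpace X] [Nonempty X]
    {ε ε' δ : ℝ} (hε' : 0 < ε') (hεε : ε' < ε) (hδ : 0 ≤ δ) :
    sepMax f w ε ≤ pseudoSepMax f (w ++ [i]) ε' δ := by
  unfold sepMax
  refine csSup_le ⟨0, ⟨∅, by simp, rfl⟩⟩ ?_
  rintro k ⟨K, hsep, rfl⟩
  apply le_csSup (aux_pseudo_bdd f (w ++ [i]) δ hε')
  refine ⟨K.image (fun x => orbitSeg f (w ++ [i]) x), ?_, ?_, ?_⟩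
  · intro c hc
    obtain ⟨x, -, rfl⟩ := Finset.mem_image.1 hc
    exact aux_orbit_isChain f _ x hδ
  · intro c hc c' hc' hne
    obtain ⟨x, hx, rfl⟩ := Finset.mem_image.1 hc
    obtain ⟨y, hy, rfl⟩ := Finset.mem_image.1 hc'
    have hxy : x ≠ y := by rintro rfl; exact hne rfl
    have hwd := hsep x hx y hy hxy
    by_contra hall
    push_neg at hall
    have : wordDist f w x y ≤ ε' := by
      apply aux_wordDist_le
      intro j hj
      have h2 := hall j (by simp; omega)
      rwa [aux_orbitSeg_append f w [i] x hj, aux_orbitSeg_append f w [i] y hj] at h2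
    linarith
  · rw [Finset.card_image_of_injOn]
    intro x _ y _ hxy
    have := congrFun hxy 0
    simpa [aux_orbitSeg_zero] using this

lemma aux_shadow {m : ℕ} (hm : 0 < m) (f : Fin m → X → X) (hf : ∀ i, Continuous (f i))
    [CompactSpace X] {ρ : ℝ} (hρ : 0 < ρ) (L : ℕ) :
    ∃ δ : ℝ, 0 < δ ∧ ∀ (w : List (Fin m)) (c : ℕ → X), IsChainSeq f w δ c →
      ∀ j : ℕ, j ≤ L → j ≤ w.length → dist (orbitSeg f w (c 0) j) (c j) ≤ ρ := by
  induction L generalizing ρ with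
  | zero =>
    refine ⟨ρ, hρ, fun w c hc j hj _ => ?_⟩
    interval_cases j
    simp [aux_orbitSeg_zero, hρ.le]
  | succ L ih =>
    haveI : Nonempty (Fin m) := ⟨⟨0, hm⟩⟩
    have hunif : ∀ i : Fin m, ∃ η, 0 < η ∧
        ∀ x y : X, dist x y < η → dist (f i x) (f i y) < ρ/2 := by
      intro i
      obtain ⟨η, hη, h⟩ := Metric.uniformContinuous_iff.mp
        (CompactSpace.uniformContinuous_of_continuous (hf i)) (ρ/2) (by positivity)
      exact ⟨η, hη, fun x y hxy => h hxy⟩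
    choose η hη1 hη2 using hunif
    set η0 : ℝ := Finset.univ.inf' Finset.univ_nonempty η with hη0
    have hη0pos : 0 < η0 := by
      rw [hη0, Finset.lt_inf'_iff]
      exact fun i _ => hη1 i
    obtain ⟨δ', hδ'pos, hδ'⟩ := ih (ρ := min (η0/2) (ρ/2)) (by positivity)
    refine ⟨min δ' (ρ/2), by positivity, ?_⟩
    intro w c hc j hj hjw
    have hc' : IsChainSeq f w δ' c := aux_chain_mono hc (min_le_left _ _)
    by_cases hj' : j ≤ L
    · refine (hδ' w c hc' j hj' hjw).trans ?_
      calc min (η0/2) (ρ/2) ≤ ρ/2 := min_le_right _ _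
        _ ≤ ρ := by linarith
    · have hjeq : j = L + 1 := by omega
      subst hjeq
      have hL : L < w.length := by omega
      have hIH := hδ' w c hc' L (le_refl L) (by omega)
      have hstep := hc L hL
      rw [aux_orbitSeg_succ f w (c 0) L hL]
      set i := w.get ⟨L, hL⟩ with hi
      have h1 : dist (orbitSeg f w (c 0) L) (c L) < η i := by
        have hle : η0 ≤ η i := Finset.inf'_le _ (Finset.mem_univ i)
        have : min (η0/2) (ρ/2) ≤ η0/2 := min_le_left _ _
        linarith
      have h2 := hη2 i _ _ h1
      calc dist (f i (orbitSeg f w (c 0) L)) (c (L + 1))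
          ≤ dist (f i (orbitSeg f w (c 0) L)) (f i (c L)) + dist (f i (c L)) (c (L + 1)) :=
            dist_triangle _ _ _
        _ ≤ ρ/2 + ρ/2 := add_le_add h2.le (hstep.trans (min_le_right _ _))
        _ = ρ := by ring

lemma aux_pseudo_le_sep (f : ι → X → X) (w : List ι) [CompactSpace X] [Nonempty X]
    {ε δ : ℝ} (hε : 0 < ε)
    (hsh : ∀ c : ℕ → X, IsChainSeq f w δ c →
      ∀ j : ℕ, j ≤ w.length → dist (orbitSeg f w (c 0) j) (c j) ≤ ε/4) :
    pseudoSepMax f w ε δ ≤ sepMax f w (ε/4) := by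
  obtain ⟨K₀, hK₀sep, hK₀card, -, hK₀span⟩ :=
    aux_sepMax_spec f w (show (0:ℝ) < ε/4 by positivity)
  choose p hpK hpd using hK₀span
  unfold pseudoSepMax
  refine csSup_le ⟨0, aux_zero_mem_pseudo f w ε δ⟩ ?_
  rintro k ⟨K, hchain, hsep, rfl⟩
  rw [← hK₀card]
  apply Finset.card_le_card_of_injOn (fun c => p (c 0)) (fun c _ => hpK _)
  intro c hc c' hc' hpp
  by_contra hne
  obtain ⟨j, hj, hd⟩ := hsep c hc c' hc' hne
  have s1 := hsh c (hchain c hc) j hj.le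
  have s2 := hsh c' (hchain c' hc') j hj.le
  have hpp' : p (c 0) = p (c' 0) := hpp
  have q2 : dist (orbitSeg f w (c 0) j) (orbitSeg f w (p (c' 0)) j) ≤
      wordDist f w (c 0) (p (c' 0)) := aux_le_wordDist f w _ _ hj.le
  have q3 : dist (orbitSeg f w (p (c' 0)) j) (orbitSeg f w (c' 0) j) ≤
      wordDist f w (p (c' 0)) (c' 0) := aux_le_wordDist f w _ _ hj.le
  rw [aux_wordDist_comm] at q3
  have hb1 : wordDist f w (c 0) (p (c' 0)) < ε/4 := by rw [← hpp']; exact hpd (c 0)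
  have hb2 : wordDist f w (c' 0) (p (c' 0)) < ε/4 := hpd (c' 0)
  have t := dist_triangle4 (c j) (orbitSeg f w (c 0) j) (orbitSeg f w (c' 0) j) (c' j)
  have tmid := dist_triangle (orbitSeg f w (c 0) j) (orbitSeg f w (p (c' 0)) j)
    (orbitSeg f w (c' 0) j)
  have q1 : dist (c j) (orbitSeg f w (c 0) j) ≤ ε/4 := by rw [dist_comm]; exact s1
  have q4 : dist (orbitSeg f w (c' 0) j) (c' j) ≤ ε/4 := s2
  linarith

lemma aux_pseudo_append (f : ι → X → X) (u v : List ι) [CompactSpace X] [Nonempty X]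
    {ε δ : ℝ} (hε : 0 < ε)
    (hsh : ∀ c : ℕ → X, IsChainSeq f u δ c →
      ∀ j : ℕ, j ≤ u.length → dist (orbitSeg f u (c 0) j) (c j) ≤ ε/4) :
    pseudoSepMax f (u ++ v) ε δ ≤ sepMax f u (ε/4) * pseudoSepMax f v ε δ := by
  obtain ⟨K₀, hK₀sep, hK₀card, -, hK₀span⟩ :=
    aux_sepMax_spec f u (show (0:ℝ) < ε/4 by positivity)
  choose p hpK hpd using hK₀span
  unfold pseudoSepMax
  refine csSup_le ⟨0, aux_zero_mem_pseudo f (u ++ v) ε δ⟩ ?_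
  rintro k ⟨K, hchain, hsep, rfl⟩
  have key : ∀ c ∈ K, ∀ c' ∈ K, p (c 0) = p (c' 0) →
      ∀ j : ℕ, j ≤ u.length → dist (c j) (c' j) ≤ ε := by
    intro c hc c' hc' hpp' j hj
    have s1 := hsh c (aux_chain_prefix (hchain c hc)) j hj
    have s2 := hsh c' (aux_chain_prefix (hchain c' hc')) j hj
    have q2 : dist (orbitSeg f u (c 0) j) (orbitSeg f u (p (c' 0)) j) ≤
        wordDist f u (c 0) (p (c' 0)) := aux_le_wordDist f u _ _ hj
    have q3 : dist (orbitSeg f u (p (c' 0)) j) (orbitSeg f u (c' 0) j) ≤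
        wordDist f u (p (c' 0)) (c' 0) := aux_le_wordDist f u _ _ hj
    rw [aux_wordDist_comm] at q3
    have hb1 : wordDist f u (c 0) (p (c' 0)) < ε/4 := by rw [← hpp']; exact hpd (c 0)
    have hb2 : wordDist f u (c' 0) (p (c' 0)) < ε/4 := hpd (c' 0)
    have t := dist_triangle4 (c j) (orbitSeg f u (c 0) j) (orbitSeg f u (c' 0) j) (c' j)
    have tmid := dist_triangle (orbitSeg f u (c 0) j) (orbitSeg f u (p (c' 0)) j)
      (orbitSeg f u (c' 0) j)
    have q1 : dist (c j) (orbitSeg f u (c 0) j) ≤ ε/4 := by rw [dist_comm]; exact s1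
    have q4 : dist (orbitSeg f u (c' 0) j) (c' j) ≤ ε/4 := s2
    linarith
  rw [mul_comm, ← hK₀card]
  apply Finset.card_le_mul_card_image_of_maps_to
    (f := fun c => p (c 0)) (fun c _ => hpK _)
  intro b _
  have hKb : ∀ Kb : Finset (ℕ → X), Kb ⊆ K → (∀ c ∈ Kb, p (c 0) = b) →
      Kb.card ≤ pseudoSepMax f v ε δ := by
    intro Kb hKbK hKbb
    have hinj : Set.InjOn (fun (c : ℕ → X) (j : ℕ) => c (u.length + j)) Kb := by
      intro c hc c' hc' hshift
      by_contra hne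
      obtain ⟨j, hj, hd⟩ := hsep c (hKbK hc) c' (hKbK hc') hne
      by_cases hju : j ≤ u.length
      · have := key c (hKbK hc) c' (hKbK hc') ((hKbb c hc).trans (hKbb c' hc').symm) j hju
        linarith
      · have hcj : c j = c' j := by
          have := congrFun hshift (j - u.length)
          simpa [show u.length + (j - u.length) = j by omega] using this
        rw [hcj, dist_self] at hd
        linarith
    rw [← Finset.card_image_of_injOn hinj]
    apply le_csSup (aux_pseudo_bdd f v δ hε)
    refine ⟨Kb.image _, ?_, ?_, rfl⟩
    · intro d hd
      obtain ⟨c, hc, rfl⟩ := Finset.mem_image.1 hd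
      exact aux_chain_shift (hchain c (hKbK hc))
    · intro d hd d' hd' hdd
      obtain ⟨c, hc, rfl⟩ := Finset.mem_image.1 hd
      obtain ⟨c', hc', rfl⟩ := Finset.mem_image.1 hd'
      have hne : c ≠ c' := by rintro rfl; exact hdd rfl
      obtain ⟨j, hj, hdist⟩ := hsep c (hKbK hc) c' (hKbK hc') hne
      have hju : ¬ j ≤ u.length := by
        intro hju
        have := key c (hKbK hc) c' (hKbK hc') ((hKbb c hc).trans (hKbb c' hc').symm) j hju
        linarith
      refine ⟨j - u.length, ?_, ?_⟩
      · simp only [List.length_append] at hj; omega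
      · simpa [show u.length + (j - u.length) = j by omega] using hdist
  exact hKb _ (Finset.filter_subset _ _) (fun c hc => (Finset.mem_filter.1 hc).2)

def aux_equiv (L k m : ℕ) : ((Fin L → Fin m) × (Fin k → Fin m)) ≃ (Fin (L + k) → Fin m) :=
  (Equiv.sumArrowEquivProdArrow _ _ _).symm.trans
    (Equiv.arrowCongr finSumFinEquiv (Equiv.refl _))

lemma aux_equiv_ofFn {L k m : ℕ} (u : Fin L → Fin m) (v : Fin k → Fin m) :
    List.ofFn (aux_equiv L k m (u, v)) = List.ofFn u ++ List.ofFn v := by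
  rw [List.ofFn_add]
  have h1 : (fun i => aux_equiv L k m (u, v) (Fin.castAdd k i)) = u := by
    funext i
    simp [aux_equiv, Equiv.sumArrowEquivProdArrow, Equiv.arrowCongr,
      finSumFinEquiv_symm_apply_castAdd]
  have h2 : (fun i => aux_equiv L k m (u, v) (Fin.natAdd L i)) = v := by
    funext i
    simp [aux_equiv, Equiv.sumArrowEquivProdArrow, Equiv.arrowCongr,
      finSumFinEquiv_symm_apply_natAdd]
  exact congrArg₂ (· ++ ·) (congrArg List.ofFn h1) (congrArg List.ofFn h2)

lemma aux_sum_split {m : ℕ} (L k : ℕ) (g : List (Fin m) → ℕ) :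
    ∑ w : Fin (L + k) → Fin m, g (List.ofFn w)
      = ∑ u : Fin L → Fin m, ∑ v : Fin k → Fin m, g (List.ofFn u ++ List.ofFn v) := by
  rw [← Equiv.sum_comp (aux_equiv L k m) (fun w => g (List.ofFn w)), Fintype.sum_prod_type]
  simp_rw [aux_equiv_ofFn]

lemma aux_sum_ge_pow {m n : ℕ} (g : (Fin n → Fin m) → ℕ) (hg : ∀ w, 1 ≤ g w) :
    m ^ n ≤ ∑ w : Fin n → Fin m, g w := by
  calc m ^ n = ∑ _w : Fin n → Fin m, 1 := by
        simp [Finset.sum_const, Fintype.card_fun]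
    _ ≤ ∑ w, g w := Finset.sum_le_sum (fun w _ => hg w)

lemma aux_sum_le_pow {m n : ℕ} (g : (Fin n → Fin m) → ℕ) {B : ℕ} (hg : ∀ w, g w ≤ B) :
    ∑ w : Fin n → Fin m, g w ≤ m ^ n * B := by
  calc ∑ w : Fin n → Fin m, g w ≤ ∑ _w : Fin n → Fin m, B :=
        Finset.sum_le_sum (fun w _ => hg w)
    _ = m ^ n * B := by simp [Finset.sum_const, Fintype.card_fun]

lemma aux_SStar_le {m : ℕ} (f : Fin m → X → X) [CompactSpace X] [Nonempty X]
    {ε δ : ℝ} (hε : 0 < ε) {L : ℕ} (hL : 0 < L)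
    (hsh : ∀ (w : List (Fin m)) (c : ℕ → X), IsChainSeq f w δ c →
      ∀ j : ℕ, j ≤ L → j ≤ w.length → dist (orbitSeg f w (c 0) j) (c j) ≤ ε/4) :
    ∀ n : ℕ, (∑ w : Fin n → Fin m, pseudoSepMax f (List.ofFn w) ε δ)
      ≤ (∑ u : Fin L → Fin m, sepMax f (List.ofFn u) (ε/4)) ^ (n / L)
        * ∑ v : Fin (n % L) → Fin m, sepMax f (List.ofFn v) (ε/4) := by
  have hsmall : ∀ w : List (Fin m), w.length ≤ L → pseudoSepMax f w ε δ ≤ sepMax f w (ε/4) := by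
    intro w hw
    exact aux_pseudo_le_sep f w hε (fun c hc j hj => hsh w c hc j (hj.trans hw) hj)
  intro n
  induction n using Nat.strong_induction_on with
  | _ n IH =>
    by_cases hn : n < L
    · rw [Nat.div_eq_of_lt hn, pow_zero, one_mul, Nat.mod_eq_of_lt hn]
      exact Finset.sum_le_sum (fun w _ => hsmall (List.ofFn w) (by simp [hn.le]))
    · push_neg at hn
      obtain ⟨k, rfl⟩ : ∃ k, n = L + k := ⟨n - L, by omega⟩
      rw [aux_sum_split L k (fun w => pseudoSepMax f w ε δ)]
      have step : ∀ u : Fin L → Fin m, ∀ v : Fin k → Fin m,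
          pseudoSepMax f (List.ofFn u ++ List.ofFn v) ε δ
            ≤ sepMax f (List.ofFn u) (ε/4) * pseudoSepMax f (List.ofFn v) ε δ := by
        intro u v
        apply aux_pseudo_append f (List.ofFn u) (List.ofFn v) hε
        intro c hc j hj
        exact hsh (List.ofFn u) c hc j (by simpa using hj) hj
      calc ∑ u : Fin L → Fin m, ∑ v : Fin k → Fin m,
            pseudoSepMax f (List.ofFn u ++ List.ofFn v) ε δ
          ≤ ∑ u : Fin L → Fin m, ∑ v : Fin k → Fin m,
            sepMax f (List.ofFn u) (ε/4) * pseudoSepMax f (List.ofFn v) ε δ :=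
            Finset.sum_le_sum (fun u _ => Finset.sum_le_sum (fun v _ => step u v))
        _ = (∑ u : Fin L → Fin m, sepMax f (List.ofFn u) (ε/4))
            * ∑ v : Fin k → Fin m, pseudoSepMax f (List.ofFn v) ε δ := by
            rw [Finset.sum_mul]
            congr 1
            funext u
            rw [Finset.mul_sum]
        _ ≤ (∑ u : Fin L → Fin m, sepMax f (List.ofFn u) (ε/4))
            * ((∑ u : Fin L → Fin m, sepMax f (List.ofFn u) (ε/4)) ^ (k / L)
              * ∑ v : Fin (k % L) → Fin m, sepMax f (List.ofFn v) (ε/4)) :=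
            Nat.mul_le_mul_left _ (IH k (by omega))
        _ = (∑ u : Fin L → Fin m, sepMax f (List.ofFn u) (ε/4)) ^ ((L + k) / L)
            * ∑ v : Fin ((L + k) % L) → Fin m, sepMax f (List.ofFn v) (ε/4) := by
            rw [Nat.add_div_left _ hL, Nat.add_mod_left, pow_succ]
            ring

lemma aux_limsup_le {u : ℕ → ℝ} {a : ℝ} (h0 : ∀ n, 0 ≤ u n)
    (h : ∀ η : ℝ, 0 < η → ∀ᶠ n in atTop, u n ≤ a + η) : limsup u atTop ≤ a := by
  have hcb : IsCoboundedUnder (· ≤ ·) atTop u := isCoboundedUnder_le_of_le atTop h0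
  apply le_of_forall_gt_imp_ge_of_dense
  intro b hb
  exact limsup_le_of_le hcb ((h (b - a) (by linarith)).mono (fun n hn => by linarith))

lemma aux_limsup_nonneg {u : ℕ → ℝ} (h0 : ∀ n, 0 ≤ u n) {M : ℝ} (hM : ∀ n, u n ≤ M) :
    0 ≤ limsup u atTop :=
  le_limsup_of_frequently_le (Frequently.of_forall (fun n => h0 n)) (isBoundedUnder_of ⟨M, hM⟩)

lemma aux_le_limsup {g : ℕ → ℝ} {x M : ℝ} (hM : ∀ n, g n ≤ M) (h : ∀ n, 1 ≤ n → x ≤ g n) :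
    x ≤ limsup g atTop :=
  le_limsup_of_frequently_le
    (frequently_atTop.2 (fun N => ⟨max N 1, le_max_left _ _, h _ (le_max_right _ _)⟩))
    (isBoundedUnder_of ⟨M, hM⟩)

lemma aux_limsup_le_of_bound {P : ℕ → ℝ} {b C : ℝ} (hP0 : ∀ n, 0 ≤ P n)
    (h : ∀ n : ℕ, 1 ≤ n → P n ≤ b + C / n) : limsup P atTop ≤ b := by
  apply aux_limsup_le hP0
  intro η hη
  have h2 : ∀ᶠ n : ℕ in atTop, C / (n : ℝ) ≤ η :=
    (tendsto_const_div_atTop_nhds_zero_nat C).eventually_le_const hη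
  filter_upwards [h2, eventually_ge_atTop 1] with n e2 e3
  linarith [h n e3]

lemma aux_limsup_easy {N P : ℕ → ℝ} {C M : ℝ}
    (hN0 : ∀ n, 0 ≤ N n) (hP0 : ∀ n, 0 ≤ P n) (hPM : ∀ n, P n ≤ M)
    (h : ∀ n : ℕ, 1 ≤ n → N n ≤ P (n + 1) + C / n) :
    limsup N atTop ≤ limsup P atTop := by
  set a := limsup P atTop with ha
  have ha0 : 0 ≤ a := aux_limsup_nonneg hP0 hPM
  have hshift : limsup (fun n => P (n + 1)) atTop = a := limsup_nat_add P 1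
  apply aux_limsup_le hN0
  intro η hη
  have h1 : ∀ᶠ n in atTop, P (n + 1) < a + η/2 := by
    have hlt : limsup (fun n => P (n + 1)) atTop < a + η/2 := by rw [hshift]; linarith
    exact eventually_lt_of_limsup_lt hlt (isBoundedUnder_of ⟨M, fun n => hPM _⟩)
  have h2 : ∀ᶠ n : ℕ in atTop, C / (n : ℝ) ≤ η/2 :=
    (tendsto_const_div_atTop_nhds_zero_nat C).eventually_le_const (by linarith)
  filter_upwards [h1, h2, eventually_ge_atTop 1] with n e1 e2 e3
  linarith [h n e3]

lemma aux_ratio_ge {m n : ℕ} (hm : 0 < m) (g : (Fin n → Fin m) → ℕ) (hg : ∀ w, 1 ≤ g w) :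
    1 ≤ (∑ w : Fin n → Fin m, (g w : ℝ)) / (m : ℝ) ^ n := by
  rw [le_div_iff₀ (by positivity), one_mul]
  have h := aux_sum_ge_pow g hg
  calc (m : ℝ) ^ n = ((m ^ n : ℕ) : ℝ) := by push_cast; ring
    _ ≤ ((∑ w, g w : ℕ) : ℝ) := by exact_mod_cast h
    _ = ∑ w : Fin n → Fin m, (g w : ℝ) := by push_cast; rfl

lemma aux_ratio_le {m n B : ℕ} (hm : 0 < m) (g : (Fin n → Fin m) → ℕ) (hg : ∀ w, g w ≤ B) :
    (∑ w : Fin n → Fin m, (g w : ℝ)) / (m : ℝ) ^ n ≤ B := by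
  rw [div_le_iff₀ (by positivity)]
  have h := aux_sum_le_pow g hg
  calc (∑ w : Fin n → Fin m, (g w : ℝ)) = ((∑ w, g w : ℕ) : ℝ) := by push_cast; rfl
    _ ≤ ((m ^ n * B : ℕ) : ℝ) := by exact_mod_cast h
    _ = (B : ℝ) * (m : ℝ) ^ n := by push_cast; ring

lemma aux_one_le_sepMax (f : ι → X → X) (w : List ι) [CompactSpace X] [Nonempty X]
    {ρ : ℝ} (hρ : 0 < ρ) : 1 ≤ sepMax f w ρ := by
  obtain ⟨K, -, -, h, -⟩ := aux_sepMax_spec f w hρ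
  exact h

lemma aux_P_term_bounds {m : ℕ} (hm : 0 < m) (f : Fin m → X → X)
    [CompactSpace X] [Nonempty X] {ε δ : ℝ} (hε : 0 < ε) (hδ : 0 < δ)
    {Cp : ℕ} (hCp : 1 ≤ Cp)
    (hbd : ∀ (n : ℕ) (K : Finset (ℕ → X)),
      (∀ c ∈ K, ∀ c' ∈ K, c ≠ c' → ∃ j : ℕ, j < n ∧ ε < dist (c j) (c' j)) →
      K.card ≤ Cp ^ n) (n : ℕ) :
    0 ≤ Real.log ((∑ w : Fin n → Fin m,
        (pseudoSepMax f (List.ofFn w) ε δ : ℝ)) / (m : ℝ) ^ n) / (n : ℝ) ∧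
    Real.log ((∑ w : Fin n → Fin m,
        (pseudoSepMax f (List.ofFn w) ε δ : ℝ)) / (m : ℝ) ^ n) / (n : ℝ) ≤ Real.log Cp := by
  have hge : 1 ≤ (∑ w : Fin n → Fin m, (pseudoSepMax f (List.ofFn w) ε δ : ℝ)) / (m : ℝ) ^ n :=
    aux_ratio_ge hm _ (fun w => aux_one_le_pseudoSepMax f _ hε hδ.le)
  have hle : (∑ w : Fin n → Fin m, (pseudoSepMax f (List.ofFn w) ε δ : ℝ)) / (m : ℝ) ^ n
      ≤ ((Cp ^ n : ℕ) : ℝ) := by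
    apply aux_ratio_le hm
    intro w
    simpa using aux_pseudoSepMax_le_pow f (List.ofFn w) δ hε hbd
  have hlog0 : (0:ℝ) ≤ Real.log Cp := Real.log_nonneg (by exact_mod_cast hCp)
  constructor
  · exact div_nonneg (Real.log_nonneg hge) (Nat.cast_nonneg n)
  · rcases Nat.eq_zero_or_pos n with rfl | hn
    · simpa using hlog0
    · rw [div_le_iff₀ (by exact_mod_cast hn)]
      calc Real.log ((∑ w : Fin n → Fin m, (pseudoSepMax f (List.ofFn w) ε δ : ℝ)) / (m : ℝ) ^ n)
          ≤ Real.log ((Cp ^ n : ℕ) : ℝ) := Real.log_le_log (by linarith) hle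
        _ = n * Real.log Cp := by push_cast; rw [Real.log_pow]
        _ = Real.log Cp * n := by ring

lemma aux_N_term_bounds {m : ℕ} (hm : 0 < m) (f : Fin m → X → X)
    [CompactSpace X] [Nonempty X] {ρ : ℝ} (hρ : 0 < ρ)
    {C4 : ℕ} (hC4 : 1 ≤ C4)
    (hbd : ∀ (w : List (Fin m)) (K : Finset X),
      (∀ x ∈ K, ∀ y ∈ K, x ≠ y → ρ ≤ wordDist f w x y) → K.card ≤ C4 ^ (w.length + 1)) (n : ℕ) :
    0 ≤ Real.log ((∑ w : Fin n → Fin m,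
        (sepMax f (List.ofFn w) ρ : ℝ)) / (m : ℝ) ^ n) / (n : ℝ) ∧
    Real.log ((∑ w : Fin n → Fin m,
        (sepMax f (List.ofFn w) ρ : ℝ)) / (m : ℝ) ^ n) / (n : ℝ) ≤ 2 * Real.log C4 := by
  have hge : 1 ≤ (∑ w : Fin n → Fin m, (sepMax f (List.ofFn w) ρ : ℝ)) / (m : ℝ) ^ n :=
    aux_ratio_ge hm _ (fun w => aux_one_le_sepMax f _ hρ)
  have hle : (∑ w : Fin n → Fin m, (sepMax f (List.ofFn w) ρ : ℝ)) / (m : ℝ) ^ n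
      ≤ ((C4 ^ (n + 1) : ℕ) : ℝ) := by
    apply aux_ratio_le hm
    intro w
    have hB : sepMax f (List.ofFn w) ρ ≤ C4 ^ ((List.ofFn w).length + 1) := by
      unfold sepMax
      refine csSup_le ⟨0, ⟨∅, by simp, rfl⟩⟩ ?_
      rintro k ⟨K, hK, rfl⟩
      exact hbd _ K hK
    simpa using hB
  have hlog0 : (0:ℝ) ≤ Real.log C4 := Real.log_nonneg (by exact_mod_cast hC4)
  constructor
  · exact div_nonneg (Real.log_nonneg hge) (Nat.cast_nonneg n)
  · rcases Nat.eq_zero_or_pos n with rfl | hn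
    · simpa using by linarith
    · rw [div_le_iff₀ (by exact_mod_cast hn)]
      have hn1 : (1:ℝ) ≤ (n:ℝ) := by exact_mod_cast hn
      calc Real.log ((∑ w : Fin n → Fin m, (sepMax f (List.ofFn w) ρ : ℝ)) / (m : ℝ) ^ n)
          ≤ Real.log ((C4 ^ (n + 1) : ℕ) : ℝ) := Real.log_le_log (by linarith) hle
        _ = (n + 1) * Real.log C4 := by push_cast; rw [Real.log_pow]; push_cast; ring
        _ ≤ (2 * Real.log C4) * n := by nlinarith

lemma aux_easy {m : ℕ} (hm : 0 < m) (f : Fin m → X → X)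
    [CompactSpace X] [Nonempty X] {ε δ : ℝ} (hε : 0 < ε) (hδ : 0 < δ) :
    limsup (fun n : ℕ => Real.log ((∑ w : Fin n → Fin m,
        (sepMax f (List.ofFn w) ε : ℝ)) / (m : ℝ) ^ n) / (n : ℝ)) atTop
      ≤ limsup (fun n : ℕ => Real.log ((∑ w : Fin n → Fin m,
        (pseudoSepMax f (List.ofFn w) (ε/2) δ : ℝ)) / (m : ℝ) ^ n) / (n : ℝ)) atTop := by
  obtain ⟨C2, hC2, hC2b⟩ := aux_pseudo_card_bound X (half_pos hε)
  have hPb := aux_P_term_bounds hm f (half_pos hε) hδ hC2 hC2b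
  have hNge : ∀ n : ℕ, 1 ≤ (∑ w : Fin n → Fin m,
      (sepMax f (List.ofFn w) ε : ℝ)) / (m : ℝ) ^ n :=
    fun n => aux_ratio_ge hm _ (fun w => aux_one_le_sepMax f _ hε)
  have hPge : ∀ n : ℕ, 1 ≤ (∑ w : Fin n → Fin m,
      (pseudoSepMax f (List.ofFn w) (ε/2) δ : ℝ)) / (m : ℝ) ^ n :=
    fun n => aux_ratio_ge hm _ (fun w => aux_one_le_pseudoSepMax f _ (half_pos hε) hδ.le)
  apply aux_limsup_easy (C := Real.log m + Real.log C2) (M := Real.log C2)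
  · intro n
    exact div_nonneg (Real.log_nonneg (hNge n)) (Nat.cast_nonneg n)
  · intro n
    exact (hPb n).1
  · intro n
    exact (hPb n).2
  · intro n hn
    have hn0 : (0:ℝ) < n := by exact_mod_cast hn
    -- ℕ-level step
    have hstepN : (∑ w : Fin n → Fin m, sepMax f (List.ofFn w) ε)
        ≤ ∑ w : Fin (n + 1) → Fin m, pseudoSepMax f (List.ofFn w) (ε/2) δ := by
      rw [aux_sum_split n 1 (fun w => pseudoSepMax f w (ε/2) δ)]
      apply Finset.sum_le_sum
      intro u _
      have h1 : sepMax f (List.ofFn u) ε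
          ≤ pseudoSepMax f (List.ofFn u ++ [(⟨0, hm⟩ : Fin m)]) (ε/2) δ :=
        aux_sep_le_pseudo f _ _ (half_pos hε) (by linarith) hδ.le
      refine h1.trans ?_
      have h2 := Finset.single_le_sum
        (f := fun v : Fin 1 → Fin m => pseudoSepMax f (List.ofFn u ++ List.ofFn v) (ε/2) δ)
        (fun v _ => Nat.zero_le _) (Finset.mem_univ (fun _ : Fin 1 => (⟨0, hm⟩ : Fin m)))
      simpa using h2
    -- real-level step
    have hreal : (∑ w : Fin n → Fin m, (sepMax f (List.ofFn w) ε : ℝ)) / (m : ℝ) ^ n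
        ≤ (m : ℝ) * ((∑ w : Fin (n+1) → Fin m,
            (pseudoSepMax f (List.ofFn w) (ε/2) δ : ℝ)) / (m : ℝ) ^ (n+1)) := by
      have hc : (∑ w : Fin n → Fin m, (sepMax f (List.ofFn w) ε : ℝ))
          ≤ ∑ w : Fin (n+1) → Fin m, (pseudoSepMax f (List.ofFn w) (ε/2) δ : ℝ) := by
        calc (∑ w : Fin n → Fin m, (sepMax f (List.ofFn w) ε : ℝ))
            = ((∑ w : Fin n → Fin m, sepMax f (List.ofFn w) ε : ℕ) : ℝ) := by push_cast; rfl
          _ ≤ ((∑ w : Fin (n+1) → Fin m, pseudoSepMax f (List.ofFn w) (ε/2) δ : ℕ) : ℝ) := by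
              exact_mod_cast hstepN
          _ = _ := by push_cast; rfl
      have e : (m:ℝ) * ((∑ w : Fin (n+1) → Fin m,
          (pseudoSepMax f (List.ofFn w) (ε/2) δ : ℝ)) / (m : ℝ) ^ (n+1))
          = (∑ w : Fin (n+1) → Fin m,
            (pseudoSepMax f (List.ofFn w) (ε/2) δ : ℝ)) / (m : ℝ) ^ n := by
        rw [pow_succ]
        have hm0 : (m:ℝ) ≠ 0 := by positivity
        field_simp
      rw [e]
      gcongr
    set S : ℝ := (∑ w : Fin n → Fin m, (sepMax f (List.ofFn w) ε : ℝ)) / (m : ℝ) ^ n with hSdef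
    set T : ℝ := (∑ w : Fin (n+1) → Fin m,
      (pseudoSepMax f (List.ofFn w) (ε/2) δ : ℝ)) / (m : ℝ) ^ (n+1) with hTdef
    have hS1 : 1 ≤ S := hNge n
    have hT1 : 1 ≤ T := hPge (n+1)
    have hlog : Real.log S ≤ Real.log m + Real.log T := by
      calc Real.log S ≤ Real.log ((m:ℝ) * T) := Real.log_le_log (by linarith) hreal
        _ = Real.log m + Real.log T := Real.log_mul (by positivity) (by linarith)
    have hPT : Real.log T / (((n+1 : ℕ)) : ℝ) ≤ Real.log C2 := (hPb (n+1)).2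
    have hPT0 : 0 ≤ Real.log T / (((n+1 : ℕ)) : ℝ) := (hPb (n+1)).1
    rw [show (((n+1 : ℕ)) : ℝ) = (n:ℝ) + 1 by push_cast; ring] at hPT hPT0 ⊢
    set p := Real.log T / ((n:ℝ) + 1) with hp
    have hTlog : Real.log T = p * ((n:ℝ) + 1) := by
      rw [hp]
      field_simp
    have key2 : Real.log S / (n:ℝ) ≤ p + (Real.log m + p) / n := by
      rw [div_le_iff₀ hn0]
      have hexp : (p + (Real.log m + p)/(n:ℝ)) * n = p*n + Real.log m + p := by
        field_simp
        ring
      rw [hexp]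
      have := hTlog ▸ hlog
      nlinarith
    calc Real.log S / (n:ℝ) ≤ p + (Real.log m + p) / n := key2
      _ ≤ p + (Real.log m + Real.log C2) / n := by gcongr

lemma aux_hard_calc {F PR : ℕ → ℝ} {L : ℕ} (hL : 0 < L)
    (hF1 : ∀ r, 1 ≤ F r) (hP1 : ∀ n, 1 ≤ PR n)
    (key : ∀ n, PR n ≤ F L ^ (n / L) * F (n % L)) :
    limsup (fun n : ℕ => Real.log (PR n) / (n : ℝ)) atTop ≤ Real.log (F L) / (L : ℝ) := by
  set B : ℝ := (∑ r ∈ Finset.range L, F r) + 1 with hBdef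
  have hsum0 : 0 ≤ ∑ r ∈ Finset.range L, F r :=
    Finset.sum_nonneg (fun i _ => by linarith [hF1 i])
  have hB1 : 1 ≤ B := by rw [hBdef]; linarith
  have hFrB : ∀ r, r < L → F r ≤ B := by
    intro r hr
    have h1 : F r ≤ ∑ i ∈ Finset.range L, F i :=
      Finset.single_le_sum (fun i _ => by linarith [hF1 i]) (Finset.mem_range.2 hr)
    rw [hBdef]; linarith
  have hFL0 : 0 ≤ Real.log (F L) := Real.log_nonneg (hF1 L)
  have hBlog : 0 ≤ Real.log B := Real.log_nonneg hB1
  apply aux_limsup_le_of_bound (C := Real.log B)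
  · intro n
    exact div_nonneg (Real.log_nonneg (hP1 n)) (Nat.cast_nonneg n)
  · intro n hn
    have hn0 : (0:ℝ) < n := by exact_mod_cast hn
    have hr : n % L < L := Nat.mod_lt n hL
    have hFLpos : (0:ℝ) < F L := by linarith [hF1 L]
    have hFrpos : (0:ℝ) < F (n % L) := by linarith [hF1 (n % L)]
    have hlog : Real.log (PR n) ≤ ((n / L : ℕ) : ℝ) * Real.log (F L) + Real.log B := by
      have h2 : Real.log (F (n % L)) ≤ Real.log B := Real.log_le_log hFrpos (hFrB _ hr)
      calc Real.log (PR n) ≤ Real.log (F L ^ (n / L) * F (n % L)) :=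
            Real.log_le_log (by linarith [hP1 n]) (key n)
        _ = ((n / L : ℕ) : ℝ) * Real.log (F L) + Real.log (F (n % L)) := by
            rw [Real.log_mul (by positivity) (by positivity), Real.log_pow]
        _ ≤ _ := by linarith
    have hq : ((n / L : ℕ) : ℝ) * (L : ℝ) ≤ (n : ℝ) := by exact_mod_cast Nat.div_mul_le_self n L
    have hL0' : (0:ℝ) < (L : ℝ) := by exact_mod_cast hL
    have hqlog : ((n / L : ℕ) : ℝ) * Real.log (F L) ≤ (n : ℝ) / L * Real.log (F L) := by
      apply mul_le_mul_of_nonneg_right _ hFL0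
      rw [le_div_iff₀ hL0']
      exact hq
    rw [div_le_iff₀ hn0]
    have hexp : (Real.log (F L) / L + Real.log B / n) * n
        = (n : ℝ) / L * Real.log (F L) + Real.log B := by
      field_simp
    rw [hexp]
    linarith

lemma aux_hard {m : ℕ} (hm : 0 < m) (f : Fin m → X → X)
    [CompactSpace X] [Nonempty X] {ε : ℝ} (hε : 0 < ε) {L : ℕ} (hL : 0 < L)
    {δ : ℝ} (hδ : 0 < δ)
    (hsh : ∀ (w : List (Fin m)) (c : ℕ → X), IsChainSeq f w δ c →
      ∀ j : ℕ, j ≤ L → j ≤ w.length → dist (orbitSeg f w (c 0) j) (c j) ≤ ε/4) :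
    limsup (fun n : ℕ => Real.log ((∑ w : Fin n → Fin m,
        (pseudoSepMax f (List.ofFn w) ε δ : ℝ)) / (m : ℝ) ^ n) / (n : ℝ)) atTop
      ≤ Real.log ((∑ u : Fin L → Fin m,
        (sepMax f (List.ofFn u) (ε/4) : ℝ)) / (m : ℝ) ^ L) / (L : ℝ) := by
  have key : ∀ n : ℕ,
      (∑ w : Fin n → Fin m, (pseudoSepMax f (List.ofFn w) ε δ : ℝ)) / (m : ℝ) ^ n
        ≤ ((∑ u : Fin L → Fin m, (sepMax f (List.ofFn u) (ε/4) : ℝ)) / (m : ℝ) ^ L) ^ (n / L)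
          * ((∑ v : Fin (n % L) → Fin m, (sepMax f (List.ofFn v) (ε/4) : ℝ)) / (m : ℝ) ^ (n % L)) := by
    intro n
    have hN := aux_SStar_le f hε hL hsh n
    have hc : ((∑ w : Fin n → Fin m, pseudoSepMax f (List.ofFn w) ε δ : ℕ) : ℝ)
        ≤ (((∑ u : Fin L → Fin m, sepMax f (List.ofFn u) (ε/4) : ℕ) : ℝ)) ^ (n / L)
          * ((∑ v : Fin (n % L) → Fin m, sepMax f (List.ofFn v) (ε/4) : ℕ) : ℝ) := by
      exact_mod_cast hN
    have e1 : (∑ w : Fin n → Fin m, (pseudoSepMax f (List.ofFn w) ε δ : ℝ))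
        = ((∑ w : Fin n → Fin m, pseudoSepMax f (List.ofFn w) ε δ : ℕ) : ℝ) := by push_cast; rfl
    have e2 : (∑ u : Fin L → Fin m, (sepMax f (List.ofFn u) (ε/4) : ℝ))
        = ((∑ u : Fin L → Fin m, sepMax f (List.ofFn u) (ε/4) : ℕ) : ℝ) := by push_cast; rfl
    have e3 : (∑ v : Fin (n % L) → Fin m, (sepMax f (List.ofFn v) (ε/4) : ℝ))
        = ((∑ v : Fin (n % L) → Fin m, sepMax f (List.ofFn v) (ε/4) : ℕ) : ℝ) := by push_cast; rfl
    have hmn : (m : ℝ) ^ n = ((m : ℝ) ^ L) ^ (n / L) * (m : ℝ) ^ (n % L) := by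
      rw [← pow_mul, ← pow_add, Nat.div_add_mod]
    rw [e1, e2, e3, div_pow, div_mul_div_comm, hmn]
    gcongr
  exact aux_hard_calc
    (F := fun r : ℕ => (∑ v : Fin r → Fin m, (sepMax f (List.ofFn v) (ε/4) : ℝ)) / (m : ℝ) ^ r)
    (PR := fun n : ℕ => (∑ w : Fin n → Fin m, (pseudoSepMax f (List.ofFn w) ε δ : ℝ)) / (m : ℝ) ^ n)
    hL (fun r => aux_ratio_ge hm _ (fun v => aux_one_le_sepMax f _ (by positivity)))
    (fun n => aux_ratio_ge hm _ (fun w => aux_one_le_pseudoSepMax f _ hε hδ.le))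
    key

end

/-- `h(G) = h*(G)`. -/
theorem stmt0 {X : Type*} [MetricSpace X] [CompactSpace X] {m : ℕ} (hm : 0 < m)
    (f : Fin m → X → X) (hf : ∀ i, Continuous (f i)) :
    topEntropy f = pseudoEntropy f := by
  haveI : Nonempty {e : ℝ // 0 < e} := ⟨⟨1, one_pos⟩⟩
  haveI : Nonempty {d : ℝ // 0 < d} := ⟨⟨1, one_pos⟩⟩
  rcases isEmpty_or_nonempty X with hX | hX
  · -- X is empty: both entropies are 0
    haveI : IsEmpty (ℕ → X) := ⟨fun c => IsEmpty.false (c 0)⟩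
    have hsep : ∀ (w : List (Fin m)) (ρ : ℝ), sepMax f w ρ = 0 := by
      intro w ρ
      have h1 : sepMax f w ρ ≤ 0 := by
        unfold sepMax
        refine csSup_le ⟨0, ⟨∅, by simp, rfl⟩⟩ ?_
        rintro k ⟨K, -, rfl⟩
        simp [Finset.eq_empty_of_isEmpty K]
      omega
    have hpse : ∀ (w : List (Fin m)) (ρ δ : ℝ), pseudoSepMax f w ρ δ = 0 := by
      intro w ρ δ
      have h1 : pseudoSepMax f w ρ δ ≤ 0 := by
        unfold pseudoSepMax
        refine csSup_le ⟨0, aux_zero_mem_pseudo f w ρ δ⟩ ?_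
        rintro k ⟨K, -, -, rfl⟩
        simp [Finset.eq_empty_of_isEmpty K]
      omega
    unfold topEntropy pseudoEntropy
    have e1 : ∀ ε : {e : ℝ // 0 < e},
        limsup (fun n : ℕ => Real.log ((∑ w : Fin n → Fin m,
          (sepMax f (List.ofFn w) ε.1 : ℝ)) / (m : ℝ) ^ n) / (n : ℝ)) atTop = 0 := by
      intro ε
      have hfun : (fun n : ℕ => Real.log ((∑ w : Fin n → Fin m,
          (sepMax f (List.ofFn w) ε.1 : ℝ)) / (m : ℝ) ^ n) / (n : ℝ)) = fun _ => (0:ℝ) := by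
        funext n
        simp [hsep]
      rw [hfun]
      exact limsup_const 0
    have e2 : ∀ (ε : {e : ℝ // 0 < e}) (δ : {d : ℝ // 0 < d}),
        limsup (fun n : ℕ => Real.log ((∑ w : Fin n → Fin m,
          (pseudoSepMax f (List.ofFn w) ε.1 δ.1 : ℝ)) / (m : ℝ) ^ n) / (n : ℝ)) atTop = 0 := by
      intro ε δ
      have hfun : (fun n : ℕ => Real.log ((∑ w : Fin n → Fin m,
          (pseudoSepMax f (List.ofFn w) ε.1 δ.1 : ℝ)) / (m : ℝ) ^ n) / (n : ℝ)) = fun _ => (0:ℝ) := by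
        funext n
        simp [hpse]
      rw [hfun]
      exact limsup_const 0
    simp_rw [e1, e2, ciInf_const]
  · -- X is nonempty
    have main1 : ∀ x ∈ Set.range (fun ε : {e : ℝ // 0 < e} =>
        limsup (fun n : ℕ => Real.log ((∑ w : Fin n → Fin m,
          (sepMax f (List.ofFn w) ε.1 : ℝ)) / (m : ℝ) ^ n) / (n : ℝ)) atTop),
        ∃ y ∈ Set.range (fun ε : {e : ℝ // 0 < e} => ⨅ δ : {d : ℝ // 0 < d},
          limsup (fun n : ℕ => Real.log ((∑ w : Fin n → Fin m,
            (pseudoSepMax f (List.ofFn w) ε.1 δ.1 : ℝ)) / (m : ℝ) ^ n) / (n : ℝ)) atTop),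
          x ≤ y := by
      rintro x ⟨ε, rfl⟩
      refine ⟨_, ⟨⟨ε.1/2, half_pos ε.2⟩, rfl⟩, ?_⟩
      apply le_ciInf
      intro δ
      exact aux_easy hm f ε.2 δ.2
    have main2 : ∀ y ∈ Set.range (fun ε : {e : ℝ // 0 < e} => ⨅ δ : {d : ℝ // 0 < d},
        limsup (fun n : ℕ => Real.log ((∑ w : Fin n → Fin m,
          (pseudoSepMax f (List.ofFn w) ε.1 δ.1 : ℝ)) / (m : ℝ) ^ n) / (n : ℝ)) atTop),
        ∃ x ∈ Set.range (fun ε : {e : ℝ // 0 < e} =>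
          limsup (fun n : ℕ => Real.log ((∑ w : Fin n → Fin m,
            (sepMax f (List.ofFn w) ε.1 : ℝ)) / (m : ℝ) ^ n) / (n : ℝ)) atTop),
          y ≤ x := by
      rintro y ⟨ε, rfl⟩
      refine ⟨_, ⟨⟨ε.1/4, by have := ε.2; linarith⟩, rfl⟩, ?_⟩
      obtain ⟨Cp, hCp, hCpb⟩ := aux_pseudo_card_bound X ε.2
      obtain ⟨C4, hC4, hC4b⟩ := aux_sep_card_bound f (show (0:ℝ) < ε.1/4 by have := ε.2; linarith)
      have hbdd : BddBelow (Set.range fun δ : {d : ℝ // 0 < d} =>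
          limsup (fun n : ℕ => Real.log ((∑ w : Fin n → Fin m,
            (pseudoSepMax f (List.ofFn w) ε.1 δ.1 : ℝ)) / (m : ℝ) ^ n) / (n : ℝ)) atTop) := by
        refine ⟨0, ?_⟩
        rintro z ⟨δ, rfl⟩
        exact aux_limsup_nonneg (fun n => (aux_P_term_bounds hm f ε.2 δ.2 hCp hCpb n).1)
          (fun n => (aux_P_term_bounds hm f ε.2 δ.2 hCp hCpb n).2)
      apply aux_le_limsup (M := 2 * Real.log C4)
        (fun n => (aux_N_term_bounds hm f (show (0:ℝ) < ε.1/4 by have := ε.2; linarith) hC4 hC4b n).2)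
      intro L hL
      obtain ⟨δL, hδL, hshL⟩ := aux_shadow hm f hf (show (0:ℝ) < ε.1/4 by have := ε.2; linarith) L
      refine ciInf_le_of_le hbdd ⟨δL, hδL⟩ ?_
      exact aux_hard hm f ε.2 hL hδL hshL
    exact csSup_eq_csSup_of_forall_exists_le main1 main2
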